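/- Let a, b : ℝ → ℝ_{≥0} be differentiable with dynamics ȧ = 2F(a,b)·a and ḃ = −2F(a,b)·b, where F(a,b) = Ȳ − a + b and Ȳ > 0. Then the sets {(a,b) : F(a,b) > 0} and {(a,b) : F(a,b) < 0} are each forward invariant. -/

import Mathlib

theorem stmt5 (Y : ℝ) (hY : 0 < Y) (a b : ℝ → ℝ)
    (ha0 : ∀ t, 0 ≤ a t) (hb0 : ∀ t, 0 ≤ b t)
    (ha : ∀ t, HasDerivAt a (2 * (Y - a t + b t) * a t) t)
    (hb : ∀ t, HasDerivAt b (-2 * (Y - a t + b t) * b t) t) :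
    ((0 < Y - a 0 + b 0) → ∀ t ≥ (0 : ℝ), 0 < Y - a t + b t) ∧
    ((Y - a 0 + b 0 < 0) → ∀ t ≥ (0 : ℝ), Y - a t + b t < 0) := by
  have hca : Continuous a := continuous_iff_continuousAt.2 fun x => (ha x).continuousAt
  have hcb : Continuous b := continuous_iff_continuousAt.2 fun x => (hb x).continuousAt
  have hcs : Continuous (fun t => 2 * (a t + b t)) := by continuity
  set G : ℝ → ℝ := fun t => ∫ s in (0:ℝ)..t, 2 * (a s + b s) with hGdef
  have hG : ∀ t, HasDerivAt G (2 * (a t + b t)) t := fun t =>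
    (hcs.integral_hasStrictDerivAt 0 t).hasDerivAt
  set h : ℝ → ℝ := fun t => (Y - a t + b t) * Real.exp (G t) with hhdef
  have hh : ∀ t, HasDerivAt h 0 t := by
    intro t
    have hFd : HasDerivAt (fun t => Y - a t + b t)
        (-(2 * (a t + b t)) * (Y - a t + b t)) t := by
      have := ((hasDerivAt_const t Y).sub (ha t)).add (hb t)
      refine this.congr_deriv ?_
      ring
    have := hFd.mul ((hG t).exp)
    refine this.congr_deriv ?_
    ring
  have hconst : ∀ t, h t = h 0 := by
    intro t
    exact is_const_of_deriv_eq_zero (fun x => (hh x).differentiableAt)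
      (fun x => (hh x).deriv) t 0
  have hG0 : G 0 = 0 := by simp [hGdef]
  have key : ∀ t, (Y - a t + b t) = (Y - a 0 + b 0) * Real.exp (G 0 - G t) := by
    intro t
    have := hconst t
    simp only [hhdef] at this
    have hexp : Real.exp (G t) ≠ 0 := (Real.exp_pos _).ne'
    field_simp [Real.exp_sub] at this ⊢
    rw [Real.exp_sub, ← mul_div_assoc, eq_div_iff hexp]
    linarith [this]
  constructor
  · intro h0 t _
    rw [key t]
    exact mul_pos h0 (Real.exp_pos _)
  · intro h0 t _
    rw [key t]
    exact mul_neg_of_neg_of_pos h0 (Real.exp_pos _)
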